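/- Decision soundness (F case): given a sound verifier V, if the decision judgment P ⇒ ⟨p*, q⟩ ⇓ F is derivable, then P ⊭ p*. -/
import Mathlib


/-- The assumed program: executions of `P` satisfying all predicates in `A`. -/
def Asm {E : Type*} (P : Set E) (A : Set (E → Prop)) : Set E :=
  {e ∈ P | ∀ q ∈ A, q e}

/-- `P ⊨_A p`: every execution of `Asm P A` satisfies `p`. -/
def Models {E : Type*} (P : Set E) (A : Set (E → Prop)) (p : E → Prop) : Prop :=
  ∀ e ∈ Asm P A, p e

/-- Verifier outcomes. -/
inductive Outcome | T | F | U
deriving DecidableEq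

/-- The decision judgment `P ⇒ ⟨p*, q⟩ ⇓ d`, defined by rules DEC-FALSE, DEC-PROP, DEC-U. -/
inductive Decide {E : Type*} (V : Set E → Set (E → Prop) → (E → Prop) → Outcome)
    (P : Set E) (pstar q : E → Prop) : Outcome → Prop
  | decFalse : V P {q} pstar = .F → Decide V P pstar q .F
  | decProp (d : Outcome) : V P ∅ q = .T → V P {q} pstar = d →
      (d = .T ∨ d = .U) → Decide V P pstar q d
  | decU : V P ∅ q ≠ .T → V P {q} pstar ≠ .F → Decide V P pstar q .U

/-- Decision soundness (F case): a derivable outcome F means P ⊭ p*. -/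
theorem stmt5 {E : Type*} (V : Set E → Set (E → Prop) → (E → Prop) → Outcome)
    (P : Set E) (pstar q : E → Prop)
    (hT : ∀ A p, V P A p = .T → Models P A p)
    (hF : ∀ A p, V P A p = .F → ¬ Models P A p)
    (h : Decide V P pstar q .F) : ¬ Models P ∅ pstar := by
  cases h with
  | decFalse hv =>
    intro hm
    exact hF _ _ hv (fun e he => hm e ⟨he.1, fun r hr => absurd hr (Set.notMem_empty r)⟩)
  | decProp d h1 h2 h3 => rcases h3 with h3 | h3 <;> cases h3
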